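/- Let X₁, …, Xₙ be ℝᵈ-valued random variables with E[‖Xᵢ‖²] < ∞, means μᵢ and covariance matrices Σᵢ, and set M = ∑ᵢ (μᵢ μᵢᵀ + Σᵢ). A unit vector u ∈ ℝᵈ minimizes the total expected squared reconstruction error ∑ᵢ E[‖Xᵢ − uuᵀ Xᵢ‖²] over all unit vectors if and only if u is an eigenvector of M whose eigenvalue is the largest eigenvalue of M. In particular, distributional PCA (the leading eigenvectors of M) minimizes the total reconstruction error, which for each i equals the squared 2-Wasserstein distance W₂²(Xᵢ, uuᵀXᵢ). -/

import Mathlib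

open Matrix MeasureTheory ProbabilityTheory
open scoped ENNReal NNReal

local notation "⟪" x ", " y "⟫" => @inner ℝ _ _ x y



lemma rayleigh_core (d : ℕ) (M : Matrix (Fin d) (Fin d) ℝ) (hsymm : M.IsHermitian)
    (u : EuclideanSpace ℝ (Fin d)) (hu : ‖u‖ = 1) :
    (∀ v : EuclideanSpace ℝ (Fin d), ‖v‖ = 1 →
        ⟪(Matrix.toEuclideanCLM (𝕜 := ℝ) M) v, v⟫ ≤ ⟪(Matrix.toEuclideanCLM (𝕜 := ℝ) M) u, u⟫) ↔
    (∃ t : ℝ, M.mulVec u = t • u ∧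
        ∀ t' : ℝ, (∃ v : Fin d → ℝ, v ≠ 0 ∧ M.mulVec v = t' • v) → t' ≤ t) := by
  set T := Matrix.toEuclideanCLM (𝕜 := ℝ) M with hT
  have hsa : IsSelfAdjoint T := by
    rw [hT]
    rw [_root_.IsSelfAdjoint, ← map_star]
    exact congrArg _ (by rw [Matrix.star_eq_conjTranspose]; exact hsymm)
  have hTapp : ∀ x : EuclideanSpace ℝ (Fin d),
      (WithLp.equiv 2 (Fin d → ℝ)) (T x) = M.mulVec ((WithLp.equiv 2 (Fin d → ℝ)) x) := by
    intro x
    rw [hT, WithLp.equiv_apply, WithLp.equiv_apply, Matrix.ofLp_toEuclideanCLM]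
  have hre : ∀ x : EuclideanSpace ℝ (Fin d), T.reApplyInnerSelf x = ⟪T x, x⟫ := by
    intro x; rfl
  have hu0 : u ≠ 0 := by intro h; rw [h, norm_zero] at hu; norm_num at hu
  -- an eigenvector of T of norm one gives an eigenvector of M.mulVec
  have evec : ∀ w : EuclideanSpace ℝ (Fin d), w ≠ 0 → ∀ c : ℝ, T w = c • w →
      (∃ v : Fin d → ℝ, v ≠ 0 ∧ M.mulVec v = c • v) := by
    intro w hw c hc
    refine ⟨(WithLp.equiv 2 (Fin d → ℝ)) w, ?_, ?_⟩
    · intro h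
      apply hw
      have := congrArg (WithLp.equiv 2 (Fin d → ℝ)).symm h
      simpa using this
    · rw [← hTapp, hc]
      simp [WithLp.ofLp_smul]
  -- conversely, eigenvectors of M.mulVec give unit eigenvectors of T
  have evec' : ∀ v : Fin d → ℝ, v ≠ 0 → ∀ c : ℝ, M.mulVec v = c • v →
      ∃ w : EuclideanSpace ℝ (Fin d), ‖w‖ = 1 ∧ T w = c • w := by
    intro v hv c hc
    set w0 : EuclideanSpace ℝ (Fin d) := (WithLp.equiv 2 (Fin d → ℝ)).symm v with hw0
    have hw00 : w0 ≠ 0 := by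
      intro h; apply hv
      have := congrArg (WithLp.equiv 2 (Fin d → ℝ)) h
      simpa [hw0] using this
    have hn : ‖w0‖ ≠ 0 := norm_ne_zero_iff.mpr hw00
    refine ⟨‖w0‖⁻¹ • w0, ?_, ?_⟩
    · rw [norm_smul]; simp [hn]
    · have hTw0 : T w0 = c • w0 := by
        apply (WithLp.equiv 2 (Fin d → ℝ)).injective
        rw [hTapp]
        simp only [hw0, WithLp.equiv_symm_apply, WithLp.equiv_apply, WithLp.toLp_smul, WithLp.ofLp_smul, Equiv.apply_symm_apply]
        exact hc
      rw [T.map_smul, hTw0, smul_comm]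
  -- value of the form at a unit eigenvector is the eigenvalue
  have val : ∀ w : EuclideanSpace ℝ (Fin d), ‖w‖ = 1 → ∀ c : ℝ, T w = c • w →
      ⟪T w, w⟫ = c := by
    intro w hw c hc
    rw [hc, real_inner_smul_left, real_inner_self_eq_norm_sq, hw]
    norm_num
  constructor
  · intro h
    have hmax : IsMaxOn T.reApplyInnerSelf (Metric.sphere (0 : EuclideanSpace ℝ (Fin d)) ‖u‖) u := by
      intro x hx
      have hx1 : ‖x‖ = 1 := by
        rw [mem_sphere_zero_iff_norm] at hx; rw [hx, hu]
      simp only [Set.mem_setOf_eq, hre]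
      exact h x hx1
    have heig := hsa.eq_smul_self_of_isLocalExtrOn (x₀ := u) (Or.inr hmax.localize)
    have hray : T.rayleighQuotient u = ⟪T u, u⟫ := by
      rw [ContinuousLinearMap.rayleighQuotient, hu]
      simp [hre]
    rw [hray] at heig
    refine ⟨⟪T u, u⟫, ?_, ?_⟩
    · have := congrArg (WithLp.equiv 2 (Fin d → ℝ)) heig
      rw [hTapp] at this
      simpa [WithLp.ofLp_smul] using this
    · rintro t' ⟨v, hv, hc⟩
      obtain ⟨w, hw1, hTw⟩ := evec' v hv t' hc
      calc t' = ⟪T w, w⟫ := (val w hw1 t' hTw).symm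
        _ ≤ ⟪T u, u⟫ := h w hw1
  · rintro ⟨t, hMu, hmax⟩ v hv
    -- T u = t • u
    have hTu : T u = t • u := by
      apply (WithLp.equiv 2 (Fin d → ℝ)).injective
      rw [hTapp]
      simpa [WithLp.ofLp_smul] using hMu
    have htu : ⟪T u, u⟫ = t := val u hu t hTu
    -- get a maximizer on the sphere
    obtain ⟨w, hwmem, hwmax⟩ :=
      (isCompact_sphere (0 : EuclideanSpace ℝ (Fin d)) 1).exists_isMaxOn
        ⟨u, by simp [mem_sphere_zero_iff_norm, hu]⟩
        T.reApplyInnerSelf_continuous.continuousOn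
    have hw1 : ‖w‖ = 1 := by rwa [mem_sphere_zero_iff_norm] at hwmem
    have hw0 : w ≠ 0 := by intro h; rw [h, norm_zero] at hw1; norm_num at hw1
    have hwmax' : IsMaxOn T.reApplyInnerSelf (Metric.sphere (0 : EuclideanSpace ℝ (Fin d)) ‖w‖) w := by
      rwa [hw1]
    have heig := hsa.eq_smul_self_of_isLocalExtrOn (x₀ := w) (Or.inr hwmax'.localize)
    have hray : T.rayleighQuotient w = ⟪T w, w⟫ := by
      rw [ContinuousLinearMap.rayleighQuotient, hw1]
      simp [hre]
    rw [hray] at heig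
    have hle : ⟪T w, w⟫ ≤ t := by
      apply hmax
      exact evec w hw0 _ heig
    have hvw : ⟪T v, v⟫ ≤ ⟪T w, w⟫ := by
      have := hwmax (by simp [mem_sphere_zero_iff_norm, hv] :
        v ∈ Metric.sphere (0 : EuclideanSpace ℝ (Fin d)) 1)
      simpa [hre] using this
    rw [htu]
    exact hvw.trans hle
open scoped ENNReal NNReal


lemma mul_int {Ω : Type*} [MeasureSpace Ω] {f g : Ω → ℝ} (hf : MemLp f 2 ℙ)
    (hg : MemLp g 2 ℙ) : Integrable (fun ω => f ω * g ω) ℙ := by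
  rw [← memLp_one_iff_integrable]
  have := hg.smul (φ := f) hf (p := 2) (q := 2) (r := 1)
  simpa [smul_eq_mul, Pi.mul_def] using this

lemma recon_pointwise (d : ℕ) (v x : EuclideanSpace ℝ (Fin d)) (hv : ‖v‖ = 1) :
    ‖x - (WithLp.equiv 2 (Fin d → ℝ)).symm ((Matrix.vecMulVec v v).mulVec x)‖ ^ 2
      = ‖x‖ ^ 2 - ⟪v, x⟫ ^ 2 := by
  have key : (WithLp.equiv 2 (Fin d → ℝ)).symm ((Matrix.vecMulVec v v).mulVec x)
      = ⟪v, x⟫ • v := by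
    ext j
    simp [Matrix.mulVec, Matrix.vecMulVec_apply, dotProduct, PiLp.inner_apply,
      RCLike.inner_apply, Finset.sum_mul, Finset.mul_sum]
    ring_nf
    congr 1
    ext k
    ring
  rw [key, norm_sub_sq_real, real_inner_smul_right, real_inner_comm x v, norm_smul, hv]
  simp [mul_pow, sq_abs]
  ring

lemma coord_memLp {Ω : Type*} [MeasureSpace Ω] {d : ℕ} {X : Ω → EuclideanSpace ℝ (Fin d)}
    (hX : MemLp X 2 ℙ) (j : Fin d) : MemLp (fun ω => X ω j) 2 ℙ := by
  have := hX.const_inner (𝕜 := ℝ) (EuclideanSpace.single j 1)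
  convert this using 2 with ω
  simp [EuclideanSpace.inner_single_left]

lemma recon_integral {Ω : Type*} [MeasureSpace Ω] [IsProbabilityMeasure (ℙ : Measure Ω)]
    (d : ℕ) (X : Ω → EuclideanSpace ℝ (Fin d)) (hX : MemLp X 2 ℙ)
    (μv : Fin d → ℝ) (hμ : ∀ j, μv j = ∫ ω, X ω j)
    (C : Matrix (Fin d) (Fin d) ℝ)
    (hC : ∀ j k, C j k = ∫ ω, (X ω j - μv j) * (X ω k - μv k))
    (v : EuclideanSpace ℝ (Fin d)) (hv : ‖v‖ = 1) :
    ∫ ω, ‖X ω - (WithLp.equiv 2 (Fin d → ℝ)).symm ((Matrix.vecMulVec v v).mulVec (X ω))‖ ^ 2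
      = (∫ ω, ‖X ω‖ ^ 2)
        - ⟪Matrix.toEuclideanCLM (𝕜 := ℝ) (Matrix.vecMulVec μv μv + C) v, v⟫ := by
  have hXj : ∀ j, MemLp (fun ω => X ω j) 2 ℙ := coord_memLp hX
  have hmul : ∀ j k, Integrable (fun ω => X ω j * X ω k) ℙ :=
    fun j k => mul_int (hXj j) (hXj k)
  have hXint : ∀ j, Integrable (fun ω => X ω j) ℙ := fun j =>
    memLp_one_iff_integrable.mp ((hXj j).mono_exponent (by norm_num))
  -- second moments
  have hsec : ∀ j k, ∫ ω, X ω j * X ω k = μv j * μv k + C j k := by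
    intro j k
    have hexp : ∀ ω, (X ω j - μv j) * (X ω k - μv k)
        = X ω j * X ω k - μv j * X ω k - μv k * X ω j + μv j * μv k := by
      intro ω; ring
    have h1 : Integrable (fun ω => X ω j * X ω k - μv j * X ω k) ℙ :=
      (hmul j k).sub ((hXint k).const_mul _)
    have h2 : Integrable (fun ω => X ω j * X ω k - μv j * X ω k - μv k * X ω j) ℙ :=
      h1.sub ((hXint j).const_mul _)
    have : C j k = (∫ ω, X ω j * X ω k) - μv j * μv k := by
      rw [hC j k]
      simp_rw [hexp]
      rw [integral_add h2 (integrable_const _), integral_sub h1 ((hXint j).const_mul _),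
        integral_sub (hmul j k) ((hXint k).const_mul _),
        integral_const_mul, integral_const_mul, integral_const, ← hμ j, ← hμ k]
      simp
      ring
    rw [this]; ring
  -- integrability of the two summands
  have hnorm : Integrable (fun ω => ‖X ω‖ ^ 2) ℙ := by
    have := hX.integrable_norm_rpow (by norm_num) (by norm_num)
    have h2 : ((2 : ℝ≥0∞).toReal) = (2 : ℝ) := by norm_num
    rw [h2] at this
    convert this using 2 with ω
    rw [← Real.rpow_natCast ‖X ω‖ 2]
    norm_num
  have hinner : MemLp (fun ω => ⟪v, X ω⟫) 2 ℙ := hX.const_inner v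
  have hiv : Integrable (fun ω => ⟪v, X ω⟫ ^ 2) ℙ := hinner.integrable_sq
  -- pointwise reconstruction identity
  have hpt : ∀ ω, ‖X ω - (WithLp.equiv 2 (Fin d → ℝ)).symm
      ((Matrix.vecMulVec v v).mulVec (X ω))‖ ^ 2 = ‖X ω‖ ^ 2 - ⟪v, X ω⟫ ^ 2 :=
    fun ω => recon_pointwise d v (X ω) hv
  simp_rw [hpt]
  rw [integral_sub hnorm hiv]
  congr 1
  -- ∫ ⟪v, X⟫² equals the quadratic form
  have hq : ∀ ω, ⟪v, X ω⟫ ^ 2 = ∑ j, ∑ k, (v j * v k) * (X ω j * X ω k) := by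
    intro ω
    rw [PiLp.inner_apply]
    simp only [RCLike.inner_apply, starRingEnd_apply, star_trivial]
    rw [sq, Finset.sum_mul_sum]
    exact Finset.sum_congr rfl fun j _ => Finset.sum_congr rfl fun k _ => by ring
  simp_rw [hq]
  rw [integral_finset_sum _ (fun j _ => integrable_finset_sum _
    (fun k _ => (hmul j k).const_mul _))]
  have : ∀ j, (∫ ω, ∑ k, (v j * v k) * (X ω j * X ω k))
      = ∑ k, (v j * v k) * (μv j * μv k + C j k) := by
    intro j
    rw [integral_finset_sum _ (fun k _ => (hmul j k).const_mul _)]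
    exact Finset.sum_congr rfl fun k _ => by rw [integral_const_mul, hsec j k]
  simp_rw [this]
  -- compute the quadratic form of the matrix
  set A := Matrix.vecMulVec μv μv + C with hA
  have happ : ∀ j, (Matrix.toEuclideanCLM (𝕜 := ℝ) A v) j = ∑ k, A j k * v k := by
    intro j
    have := congrFun (Matrix.ofLp_toEuclideanCLM (𝕜 := ℝ) A v) j
    simpa [Matrix.toLin'_apply, Matrix.mulVec, dotProduct] using this
  rw [PiLp.inner_apply]
  simp only [RCLike.inner_apply, starRingEnd_apply, star_trivial]
  refine Finset.sum_congr rfl fun j _ => ?_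
  rw [happ, Finset.mul_sum]
  refine Finset.sum_congr rfl fun k _ => ?_
  rw [hA]
  simp [Matrix.vecMulVec_apply]
  ring


/-- For a distributional dataset with PCA matrix `M = ∑ᵢ (μᵢ μᵢᵀ + Σᵢ)`, a unit
vector `u` minimizes the total expected squared reconstruction error
`∑ᵢ E[‖Xᵢ − uuᵀ Xᵢ‖²]` (which equals `∑ᵢ W₂²(Xᵢ, uuᵀXᵢ)`) over all unit
vectors if and only if `u` is an eigenvector of `M` whose eigenvalue is the
largest eigenvalue of `M`. -/
theorem distributional_pca_minimizes_reconstruction_error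
    (d n : ℕ) (Ω : Type*) [MeasureSpace Ω] [IsProbabilityMeasure (ℙ : Measure Ω)]
    (X : Fin n → Ω → EuclideanSpace ℝ (Fin d)) (hX : ∀ i, MemLp (X i) 2 ℙ)
    (μ : Fin n → Fin d → ℝ) (hμ : ∀ i j, μ i j = ∫ ω, X i ω j)
    (Cov : Fin n → Matrix (Fin d) (Fin d) ℝ)
    (hCov : ∀ i j k, Cov i j k = ∫ ω, (X i ω j - μ i j) * (X i ω k - μ i k))
    (M : Matrix (Fin d) (Fin d) ℝ)
    (hM : M = ∑ i, (Matrix.vecMulVec (μ i) (μ i) + Cov i))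
    (u : EuclideanSpace ℝ (Fin d)) (hu : ‖u‖ = 1) :
    (∀ v : EuclideanSpace ℝ (Fin d), ‖v‖ = 1 →
        ∑ i, ∫ ω, ‖X i ω - (WithLp.equiv 2 (Fin d → ℝ)).symm
            ((Matrix.vecMulVec u u).mulVec (X i ω))‖ ^ 2
          ≤ ∑ i, ∫ ω, ‖X i ω - (WithLp.equiv 2 (Fin d → ℝ)).symm
            ((Matrix.vecMulVec v v).mulVec (X i ω))‖ ^ 2) ↔
    (∃ t : ℝ, M.mulVec u = t • u ∧
        ∀ t' : ℝ, (∃ v : Fin d → ℝ, v ≠ 0 ∧ M.mulVec v = t' • v) → t' ≤ t) := by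
  have hherm : M.IsHermitian := by
    have : Mᴴ = M := by
      ext j k
      simp only [Matrix.conjTranspose_apply, star_trivial, hM, Matrix.sum_apply,
        Matrix.add_apply, Matrix.vecMulVec_apply, hCov]
      refine Finset.sum_congr rfl fun i _ => ?_
      rw [mul_comm (μ i k) (μ i j)]
      congr 1
      exact congrArg (fun f => ∫ ω, f ω) (funext fun ω => mul_comm (X i ω k - μ i k) (X i ω j - μ i j))
    exact this
  -- total error formula
  have key : ∀ v : EuclideanSpace ℝ (Fin d), ‖v‖ = 1 →
      (∑ i, ∫ ω, ‖X i ω - (WithLp.equiv 2 (Fin d → ℝ)).symm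
          ((Matrix.vecMulVec v v).mulVec (X i ω))‖ ^ 2)
        = (∑ i, ∫ ω, ‖X i ω‖ ^ 2)
          - @inner ℝ _ _ (Matrix.toEuclideanCLM (𝕜 := ℝ) M v) v := by
    intro v hv
    have h1 : ∀ i : Fin n,
        (∫ ω, ‖X i ω - (WithLp.equiv 2 (Fin d → ℝ)).symm
            ((Matrix.vecMulVec v v).mulVec (X i ω))‖ ^ 2)
          = (∫ ω, ‖X i ω‖ ^ 2)
            - @inner ℝ _ _
              (Matrix.toEuclideanCLM (𝕜 := ℝ) (Matrix.vecMulVec (μ i) (μ i) + Cov i) v) v :=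
      fun i => recon_integral d (X i) (hX i) (μ i) (hμ i) (Cov i) (hCov i) v hv
    simp_rw [h1]
    rw [Finset.sum_sub_distrib]
    congr 1
    rw [hM, map_sum]
    rw [ContinuousLinearMap.sum_apply, sum_inner]
  constructor
  · intro h
    rw [← rayleigh_core d M hherm u hu]
    intro v hv
    have := h v hv
    rw [key u hu, key v hv] at this
    linarith
  · intro h
    rw [← rayleigh_core d M hherm u hu] at h
    intro v hv
    rw [key u hu, key v hv]
    have := h v hv
    linarith
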